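/- If a continuous map f on a compact metric space with at least two points is minimal and has shadowing, then f does not have mean ergodic shadowing. -/

import Mathlib

open Filter Metric

noncomputable def cnt (E : Set ℕ) (n : ℕ) : ℝ :=
  ∑ i ∈ Finset.range n, Set.indicator E (fun _ => (1 : ℝ)) i

def DensityZero (E : Set ℕ) : Prop :=
  Filter.Tendsto (fun n : ℕ => cnt E n / n) Filter.atTop (nhds 0)

noncomputable def upperDensity (E : Set ℕ) : ℝ :=
  Filter.limsup (fun n : ℕ => cnt E n / n) Filter.atTop

noncomputable def lowerDensity (E : Set ℕ) : ℝ :=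
  Filter.liminf (fun n : ℕ => cnt E n / n) Filter.atTop

variable {X : Type*}

def ErgodicPseudoOrbit [MetricSpace X] (f : X → X) (δ : ℝ) (ξ : ℕ → X) : Prop :=
  DensityZero {i | δ ≤ dist (f (ξ i)) (ξ (i + 1))}

def AvgShadows [MetricSpace X] (f : X → X) (ε : ℝ) (p : X) (ξ : ℕ → X) : Prop :=
  Filter.limsup (fun n : ℕ => (∑ i ∈ Finset.range n, dist (f^[i] p) (ξ i)) / n) Filter.atTop < ε

def MeanErgodicShadowingAvg [MetricSpace X] (f : X → X) : Prop :=
  ∀ ε > 0, ∃ δ > 0, ∀ ξ : ℕ → X, ErgodicPseudoOrbit f δ ξ → ∃ p : X, AvgShadows f ε p ξ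

def MeanErgodicShadowingDens [MetricSpace X] (f : X → X) : Prop :=
  ∀ ε > 0, ∃ δ > 0, ∀ ξ : ℕ → X, ErgodicPseudoOrbit f δ ξ →
    ∃ p : X, upperDensity {i | ε ≤ dist (f^[i] p) (ξ i)} < ε

def Shadowing [MetricSpace X] (f : X → X) : Prop :=
  ∀ ε > 0, ∃ δ > 0, ∀ ξ : ℕ → X, (∀ i, dist (f (ξ i)) (ξ (i + 1)) < δ) →
    ∃ p : X, ∀ i, dist (f^[i] p) (ξ i) < ε

def MinimalMap [TopologicalSpace X] (f : X → X) : Prop :=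
  ∀ x : X, Dense (Set.range fun n : ℕ => f^[n] x)


section Aux

set_option linter.unusedSectionVars false
set_option linter.unusedVariables false

section Chains

variable {X : Type*} [MetricSpace X]

/-- A δ-chain of length n from x to y. -/
def ChainFT (f : X → X) (δ : ℝ) (x y : X) (n : ℕ) : Prop :=
  ∃ c : ℕ → X, c 0 = x ∧ c n = y ∧ ∀ i < n, dist (f (c i)) (c (i + 1)) < δ

lemma ChainFT.concat {f : X → X} {δ : ℝ} {x y z : X} {m n : ℕ}
    (h1 : ChainFT f δ x y m) (h2 : ChainFT f δ y z n) : ChainFT f δ x z (m + n) := by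
  obtain ⟨c1, hc10, hc1m, hc1s⟩ := h1
  obtain ⟨c2, hc20, hc2n, hc2s⟩ := h2
  refine ⟨fun i => if i ≤ m then c1 i else c2 (i - m), by simp [hc10], ?_, ?_⟩
  · by_cases hn : n = 0
    · subst hn; simpa [hc1m] using hc20.symm.trans hc2n
    · have : ¬ (m + n ≤ m) := by omega
      simp only [this, if_false]
      rw [Nat.add_sub_cancel_left, hc2n]
  · intro i hi
    by_cases h1 : i + 1 ≤ m
    · have : i ≤ m := by omega
      simp only [this, h1, if_true]
      exact hc1s i (by omega)
    · by_cases h2 : i ≤ m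
      · have hm : i = m := by omega
        subst hm
        simp only [le_refl, if_true, h1, if_false]
        have : i + 1 - i = 1 := by omega
        rw [this]
        have h0 : c2 0 = c1 i := by rw [hc20, hc1m]
        have := hc2s 0 (by omega)
        rwa [h0] at this
      · simp only [h2, h1, if_false]
        have : i + 1 - m = (i - m) + 1 := by omega
        rw [this]
        exact hc2s (i - m) (by omega)

lemma ChainFT.orbit (f : X → X) {δ : ℝ} (hδ : 0 < δ) (x : X) (n : ℕ) :
    ChainFT f δ x (f^[n] x) n := by
  refine ⟨fun i => f^[i] x, by simp, rfl, fun i _ => ?_⟩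
  rw [← Function.iterate_succ_apply' f i x]
  simpa using hδ

lemma ChainFT.single {f : X → X} {δ : ℝ} {x y : X} (h : dist (f x) y < δ) :
    ChainFT f δ x y 1 := by
  refine ⟨fun i => if i = 0 then x else y, by simp, by simp, fun i hi => ?_⟩
  have : i = 0 := by omega
  subst this
  simpa using h

lemma ChainFT.refl {f : X → X} {δ : ℝ} (x : X) : ChainFT f δ x x 0 :=
  ⟨fun _ => x, rfl, rfl, by omega⟩

lemma ChainFT.nsmul {f : X → X} {δ : ℝ} {y : X} {n : ℕ} (h : ChainFT f δ y y n) :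
    ∀ m, ChainFT f δ y y (m * n) := by
  intro m
  induction m with
  | zero => simpa using ChainFT.refl y
  | succ k ih =>
    have := ih.concat h
    simpa [Nat.succ_mul] using this

end Chains

lemma cnt_eq_card (E : Set ℕ) (n : ℕ) [DecidablePred (· ∈ E)] :
    cnt E n = ((Finset.range n).filter (· ∈ E)).card := by
  unfold cnt
  rw [← Finset.sum_boole]
  congr 1
  ext i
  simp [Set.indicator_apply]

lemma cnt_nonneg (E : Set ℕ) (n : ℕ) : 0 ≤ cnt E n := by
  unfold cnt
  exact Finset.sum_nonneg fun i _ => Set.indicator_nonneg (by simp) i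

lemma cnt_le (E : Set ℕ) (n : ℕ) : cnt E n ≤ n := by
  unfold cnt
  calc ∑ i ∈ Finset.range n, Set.indicator E (fun _ => (1 : ℝ)) i
      ≤ ∑ _i ∈ Finset.range n, (1 : ℝ) := by
        refine Finset.sum_le_sum fun i _ => ?_
        by_cases h : i ∈ E <;> simp [Set.indicator_apply, h]
    _ = n := by simp

lemma cnt_mono (E F : Set ℕ) (h : E ⊆ F) (n : ℕ) : cnt E n ≤ cnt F n := by
  unfold cnt
  refine Finset.sum_le_sum fun i _ => ?_
  by_cases hi : i ∈ E
  · simp [Set.indicator_apply, hi, h hi]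
  · by_cases hj : i ∈ F <;> simp [Set.indicator_apply, hi, hj]

lemma DensityZero.mono {E F : Set ℕ} (h : E ⊆ F) (hF : DensityZero F) : DensityZero E := by
  refine squeeze_zero (fun n => ?_) (fun n => ?_) hF
  · exact div_nonneg (cnt_nonneg E n) (Nat.cast_nonneg n)
  · rcases Nat.eq_zero_or_pos n with rfl | hn
    · simp
    · exact div_le_div_of_nonneg_right (cnt_mono E F h n) (by positivity)

lemma cnt_block_le (E : Set ℕ) {a b n : ℕ} (hab : a ≤ b) (hbn : b ≤ n)
    (h : ∀ i, a ≤ i → i < b → i ∈ E) : (b : ℝ) - a ≤ cnt E n := by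
  classical
  rw [cnt_eq_card]
  have hsub : Finset.Ico a b ⊆ (Finset.range n).filter (· ∈ E) := by
    intro i hi
    simp only [Finset.mem_Ico] at hi
    simp only [Finset.mem_filter, Finset.mem_range]
    exact ⟨by omega, h i hi.1 hi.2⟩
  have := Finset.card_le_card hsub
  have hcard : (Finset.Ico a b).card = b - a := Nat.card_Ico a b
  have : (b - a : ℕ) ≤ ((Finset.range n).filter (· ∈ E)).card := by omega
  calc (b : ℝ) - a ≤ ((b - a : ℕ) : ℝ) := by rw [Nat.cast_sub hab]
    _ ≤ _ := by exact_mod_cast this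

lemma log_density_aux :
    Filter.Tendsto (fun n : ℕ => Real.logb 2 (n + 1) / n) Filter.atTop (nhds 0) := by
  have h1 : Filter.Tendsto (fun n : ℕ => ((n : ℝ) + 1)) atTop atTop :=
    tendsto_atTop_add_const_right atTop 1 tendsto_natCast_atTop_atTop
  have h2 := (Real.tendsto_pow_log_div_mul_add_atTop 1 (-1) 1 one_ne_zero).comp h1
  have h3 : Filter.Tendsto (fun n : ℕ => Real.log ((n : ℝ) + 1) / n) atTop (nhds 0) := by
    refine h2.congr fun n => ?_
    simp only [Function.comp]
    ring_nf
  have : (fun n : ℕ => Real.logb 2 ((n : ℝ) + 1) / n)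
      = fun n : ℕ => (Real.log ((n : ℝ) + 1) / n) * (Real.log 2)⁻¹ := by
    funext n
    rw [Real.logb]
    ring
  rw [this]
  simpa using h3.mul_const (Real.log 2)⁻¹

lemma jump_density_zero (t : ℕ → ℕ) (hd : ∀ k, 2 * (t k + 1) ≤ t (k + 1) + 1) (ht0 : t 0 = 0) :
    DensityZero {i | ∃ k, i + 1 = t (k + 1)} := by
  classical
  set J : Set ℕ := {i | ∃ k, i + 1 = t (k + 1)} with hJ
  have tpow : ∀ k, 2 ^ k ≤ t k + 1 := by
    intro k
    induction k with
    | zero => simp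
    | succ m ih =>
      calc 2 ^ (m + 1) = 2 * 2 ^ m := by ring
        _ ≤ 2 * (t m + 1) := by omega
        _ ≤ t (m + 1) + 1 := hd m
  have key : ∀ n : ℕ, cnt J n ≤ (Nat.log 2 (n + 1) : ℝ) := by
    intro n
    rw [cnt_eq_card]
    set g : ℕ → ℕ := fun i => if h : ∃ k, i + 1 = t (k + 1) then Nat.find h else 0 with hg
    have hcard : ((Finset.range n).filter (· ∈ J)).card
        ≤ (Finset.range (Nat.log 2 (n + 1))).card := by
      refine Finset.card_le_card_of_injOn g ?_ ?_
      · intro i hi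
        simp only [Finset.mem_coe, Finset.mem_filter, Finset.mem_range, hJ, Set.mem_setOf_eq] at hi
        obtain ⟨hin, hex⟩ := hi
        simp only [hg, dif_pos hex]
        have hspec := Nat.find_spec hex
        have hle : 2 ^ (Nat.find hex + 1) ≤ n + 1 := by
          have := tpow (Nat.find hex + 1)
          omega
        have := Nat.le_log_of_pow_le (by norm_num) hle
        simp only [Finset.mem_coe, Finset.mem_range]
        omega
      · intro i hi i' hi' heq
        simp only [Finset.coe_filter, Set.mem_setOf_eq, Finset.mem_range, hJ] at hi hi'
        obtain ⟨-, hex⟩ := hi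
        obtain ⟨-, hex'⟩ := hi'
        simp only [hg, dif_pos hex, dif_pos hex'] at heq
        have h1 := Nat.find_spec hex
        have h2 := Nat.find_spec hex'
        rw [heq] at h1
        omega
    rw [Finset.card_range] at hcard
    exact_mod_cast hcard
  refine squeeze_zero (fun n => div_nonneg (cnt_nonneg _ _) (Nat.cast_nonneg n)) (fun n => ?_)
    (log_density_aux)
  rcases Nat.eq_zero_or_pos n with rfl | hn
  · simp [cnt]
  · have hb : (Nat.log 2 (n + 1) : ℝ) ≤ Real.logb 2 ((n : ℝ) + 1) := by
      have h2 : (2 : ℕ) ^ (Nat.log 2 (n + 1)) ≤ n + 1 := Nat.pow_log_le_self 2 (by omega)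
      have hcast : ((2 : ℝ)) ^ (Nat.log 2 (n + 1) : ℕ) ≤ (n + 1 : ℝ) := by exact_mod_cast h2
      calc (Nat.log 2 (n + 1) : ℝ)
          = Real.logb 2 ((2 : ℝ) ^ (Nat.log 2 (n + 1) : ℕ)) := by
            rw [Real.logb_pow, Real.logb_self_eq_one (by norm_num : (1:ℝ) < 2)]
            ring
        _ ≤ Real.logb 2 ((n : ℝ) + 1) := Real.logb_le_logb_of_le (by norm_num : (1:ℝ) < 2) (by positivity) hcast
    have := (key n).trans hb
    exact div_le_div_of_nonneg_right this (by positivity) |>.trans le_rfl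

lemma recurrent_pow {X : Type*} [MetricSpace X] [CompactSpace X] (f : X → X)
    (hf : Continuous f) (hmin : MinimalMap f) (N : ℕ) (hN : 1 ≤ N) (p : X)
    (r : ℝ) (hr : 0 < r) (J : ℕ) :
    ∃ j, J ≤ j ∧ 1 ≤ j ∧ dist (f^[N * j] p) p < r := by
  haveI : Nonempty X := ⟨p⟩
  set g : X → X := f^[N] with hgdef
  have hg : Continuous g := hf.iterate N
  set S : Set (Set X) := {Y | Y.Nonempty ∧ IsClosed Y ∧ Set.MapsTo g Y Y} with hS
  have huniv : Set.univ ∈ S := ⟨Set.univ_nonempty, isClosed_univ, Set.mapsTo_univ g _⟩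
  have hzorn := zorn_superset_nonempty S ?_ Set.univ huniv
  · obtain ⟨Y, -, hYS, hYmin⟩ := hzorn
    obtain ⟨hYne, hYcl, hYmaps⟩ := hYS
    -- X = union of f^[i] '' Y for i < N
    set U : Set X := ⋃ i ∈ Finset.range N, f^[i] '' Y with hU
    have hUcl : IsClosed U := by
      refine Set.Finite.isClosed_biUnion (Finset.finite_toSet _) fun i _ => ?_
      exact ((hYcl.isCompact).image (hf.iterate i)).isClosed
    have hUmaps : Set.MapsTo f U U := by
      intro x hx
      simp only [hU, Set.mem_iUnion, Finset.mem_coe, Finset.mem_range] at hx ⊢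
      obtain ⟨i, hi, y, hy, rfl⟩ := hx
      by_cases hiN : i + 1 < N
      · exact ⟨i + 1, hiN, y, hy, Function.iterate_succ_apply' f i y⟩
      · have : i + 1 = N := by omega
        refine ⟨0, by omega, g y, hYmaps hy, ?_⟩
        simp only [Function.iterate_zero, id_eq, hgdef]
        rw [← this, Function.iterate_succ_apply' f i y]
    have hUuniv : ∀ x : X, x ∈ U := by
      obtain ⟨y0, hy0⟩ := hYne
      have hy0U : y0 ∈ U := by
        simp only [hU, Set.mem_iUnion, Finset.mem_coe, Finset.mem_range]
        exact ⟨0, by omega, y0, hy0, rfl⟩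
      have horb : Set.range (fun n : ℕ => f^[n] y0) ⊆ U := by
        rintro - ⟨n, rfl⟩
        exact (hUmaps.iterate n) hy0U
      have := (hmin y0).closure_eq
      intro x
      have hx : x ∈ closure (Set.range fun n : ℕ => f^[n] y0) := by rw [this]; trivial
      exact hUcl.closure_subset_iff.mpr horb hx
    obtain ⟨i, hi, y, hyY, hyp⟩ : ∃ i, i ∈ Finset.range N ∧ ∃ y, y ∈ Y ∧ f^[i] y = p := by
      have := hUuniv p
      simp only [hU, Set.mem_iUnion, Finset.mem_coe, exists_prop] at this
      obtain ⟨i, hi, y, hy, hyp⟩ := this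
      exact ⟨i, hi, y, hy, hyp⟩
    -- continuity of f^[i] at y
    obtain ⟨ρ, hρ, hcont⟩ : ∃ ρ > 0, ∀ z, dist z y < ρ → dist (f^[i] z) (f^[i] y) < r := by
      have := (hf.iterate i).continuousAt (x := y)
      rw [Metric.continuousAt_iff] at this
      obtain ⟨ρ, hρ, h⟩ := this r hr
      exact ⟨ρ, hρ, fun z hz => h hz⟩
    set M := max J 1 with hM
    set C : Set X := closure (Set.range fun s : ℕ => g^[M + s] y) with hC
    have hrangeY : Set.range (fun s : ℕ => g^[M + s] y) ⊆ Y := by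
      rintro - ⟨s, rfl⟩
      exact (hYmaps.iterate (M + s)) hyY
    have hCY : C ⊆ Y := hYcl.closure_subset_iff.mpr hrangeY
    have hCS : C ∈ S := by
      refine ⟨⟨g^[M] y, subset_closure ⟨0, by simp⟩⟩, isClosed_closure, ?_⟩
      intro x hx
      have h1 : g x ∈ g '' C := ⟨x, hx, rfl⟩
      have h2 : g '' C ⊆ closure (g '' Set.range fun s : ℕ => g^[M + s] y) :=
        image_closure_subset_closure_image hg
      have h3 : (g '' Set.range fun s : ℕ => g^[M + s] y)
          ⊆ Set.range fun s : ℕ => g^[M + s] y := by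
        rintro - ⟨-, ⟨s, rfl⟩, rfl⟩
        refine ⟨s + 1, ?_⟩
        show g^[M + (s + 1)] y = g (g^[M + s] y)
        rw [show M + (s + 1) = (M + s) + 1 by omega, Function.iterate_succ_apply']
      have h4 := closure_mono h3
      exact h4 (h2 h1)
    have hYC : Y ⊆ C := hYmin hCS hCY
    have hyC : y ∈ C := hYC hyY
    rw [hC, Metric.mem_closure_iff] at hyC
    obtain ⟨z, ⟨s, rfl⟩, hz⟩ := hyC ρ hρ
    refine ⟨M + s, by omega, by omega, ?_⟩
    have hdist : dist (g^[M + s] y) y < ρ := by rwa [dist_comm] at hz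
    have hgo := hcont (g^[M + s] y) hdist
    have heq : f^[i] (g^[M + s] y) = f^[N * (M + s)] (f^[i] y) := by
      rw [hgdef, ← Function.iterate_mul, ← Function.iterate_add_apply,
        ← Function.iterate_add_apply, Nat.add_comm]
    rw [heq, hyp] at hgo
    exact hgo
  · -- Zorn chain condition
    intro c hcS hchain hcne
    refine ⟨⋂₀ c, ⟨?_, ?_, ?_⟩, fun s hs => Set.sInter_subset_of_mem hs⟩
    · haveI : Nonempty ↥c := hcne.to_subtype
      have hdir : DirectedOn (· ⊇ ·) c := by
        intro a ha b hb
        rcases hchain.total ha hb with h | h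
        · exact ⟨a, ha, subset_refl a, h⟩
        · exact ⟨b, hb, h, subset_refl b⟩
      refine IsCompact.nonempty_sInter_of_directed_nonempty_isCompact_isClosed
        hdir (fun V hV => (hcS hV).1)
        (fun V hV => (hcS hV).2.1.isCompact) (fun V hV => (hcS hV).2.1)
    · exact isClosed_sInter fun V hV => (hcS hV).2.1
    · intro x hx
      intro V hV
      exact (hcS hV).2.2 (hx V hV)

section LemB

variable {X : Type*} [MetricSpace X] [CompactSpace X]

/-- return times beyond any point -/
lemma return_after (f : X → X) (hmin : MinimalMap f) (x : X) (v : ℕ) {ρ : ℝ} (hρ : 0 < ρ) :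
    ∃ w, 1 ≤ w ∧ dist (f^[v + w] x) x < ρ := by
  have hd := hmin (f^[v + 1] x)
  rw [Metric.dense_iff] at hd
  obtain ⟨z, hz1, s, rfl⟩ := hd x ρ hρ
  refine ⟨s + 1, by omega, ?_⟩
  rw [Metric.mem_ball] at hz1
  have : f^[s] (f^[v + 1] x) = f^[v + (s + 1)] x := by
    rw [← Function.iterate_add_apply]
    congr 1
    omega
  rw [← this]
  simpa using hz1

lemma loop_of_return (f : X → X) {δ : ℝ} (hδ : 0 < δ) (x : X) {w : ℕ} (hw : 1 ≤ w)
    (h : dist (f^[w] x) x < δ) : ChainFT f δ x x w := by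
  have h1 : ChainFT f δ x (f^[w - 1] x) (w - 1) := ChainFT.orbit f hδ x (w - 1)
  have h2 : dist (f (f^[w - 1] x)) x < δ := by
    have h3 : f (f^[w - 1] x) = f^[w] x := by
      rw [← Function.iterate_succ_apply' f (w - 1) x]
      congr 1
      omega
    rwa [h3]
  have := h1.concat (ChainFT.single h2)
  have heq : w - 1 + 1 = w := by omega
  rwa [heq] at this

lemma consecutive_loops (f : X → X) (hf : Continuous f) (hmin : MinimalMap f)
    (hmes : MeanErgodicShadowingDens f) {δ : ℝ} (hδ : 0 < δ) (b : X) :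
    ∃ s, 1 ≤ s ∧ ChainFT f δ b b s ∧ ChainFT f δ b b (s + 1) := by
  classical
  set Rb : ℕ → Prop := fun n => 1 ≤ n ∧ ChainFT f δ b b n with hRb
  have hadd : ∀ {m n}, Rb m → Rb n → Rb (m + n) := by
    rintro m n ⟨hm, cm⟩ ⟨hn, cn⟩
    exact ⟨by omega, cm.concat cn⟩
  -- R is nonempty
  have hR0 : ∃ n, Rb n := by
    obtain ⟨w, hw, hret⟩ := return_after f hmin b 0 hδ
    exact ⟨w, hw, loop_of_return f hδ b hw (by simpa using hret)⟩
  -- the subgroup generated by R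
  set G : AddSubgroup ℤ := AddSubgroup.closure ((fun n : ℕ => (n : ℤ)) '' {n | Rb n}) with hG
  have hGex : ∃ n : ℕ, 0 < n ∧ (n : ℤ) ∈ G := by
    obtain ⟨n, hn⟩ := hR0
    exact ⟨n, hn.1, AddSubgroup.subset_closure ⟨n, hn, rfl⟩⟩
  set d : ℕ := Nat.find hGex with hdd
  obtain ⟨hdpos, hdG⟩ : 0 < d ∧ (d : ℤ) ∈ G := Nat.find_spec hGex
  have hdvd : ∀ z : ℤ, z ∈ G → (d : ℤ) ∣ z := by
    intro z hz
    by_contra hcon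
    have hd0 : (d : ℤ) ≠ 0 := by exact_mod_cast hdpos.ne'
    have hmem : z % (d : ℤ) ∈ G := by
      rw [Int.emod_def]
      exact AddSubgroup.sub_mem G hz (by
        have := AddSubgroup.zsmul_mem G hdG (z / (d : ℤ))
        rwa [zsmul_eq_mul, mul_comm] at this)
    have hnonneg : 0 ≤ z % (d : ℤ) := Int.emod_nonneg z hd0
    have hlt : z % (d : ℤ) < d := Int.emod_lt_of_pos z (by exact_mod_cast hdpos)
    have hne : z % (d : ℤ) ≠ 0 := fun h => hcon (Int.dvd_of_emod_eq_zero h)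
    set m := (z % (d : ℤ)).toNat with hm
    have hmd : m < d := by omega
    have := Nat.find_min hGex hmd
    push_neg at this
    have hmpos : 0 < m := by omega
    have : ¬ ((m : ℤ) ∈ G) := by simpa [hmpos] using this hmpos
    apply this
    have : (m : ℤ) = z % (d : ℤ) := by omega
    rwa [this]
  -- d ∣ every element of R
  have hdvdR : ∀ n, Rb n → d ∣ n := by
    intro n hn
    have := hdvd n (AddSubgroup.subset_closure ⟨n, hn, rfl⟩)
    exact_mod_cast this
  -- MAIN: d = 1
  have hd1 : d = 1 := by
    -- uniform continuity at scale δ/2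
    obtain ⟨η, hη, hucont⟩ : ∃ η > 0, ∀ x y : X, dist x y < η → dist (f x) (f y) < δ / 2 := by
      have huc := CompactSpace.uniformContinuous_of_continuous hf
      rw [Metric.uniformContinuous_iff] at huc
      obtain ⟨η, hη, h⟩ := huc (δ / 2) (by linarith)
      exact ⟨η, hη, fun u v huv => h huv⟩
    set ε' : ℝ := min η (min (δ / 2) (1 / 4)) with hε'def
    have hε' : 0 < ε' := lt_min hη (lt_min (by linarith) (by norm_num))
    have hε'η : ε' ≤ η := min_le_left _ _
    have hε'δ : ε' ≤ δ / 2 := le_trans (min_le_right _ _) (min_le_left _ _)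
    have hε'4 : ε' ≤ 1 / 4 := le_trans (min_le_right _ _) (min_le_right _ _)
    obtain ⟨δ', hδ'pos, hshad⟩ := hmes ε' hε'
    -- block sequence
    set t : ℕ → ℕ := fun k => Nat.rec 0 (fun _ tk => tk + (d * (tk + 1) + 1)) k with htdef
    have ht : ∀ k, t (k + 1) = t k + (d * (t k + 1) + 1) := fun k => rfl
    have ht0 : t 0 = 0 := rfl
    have hdbl : ∀ k, 2 * (t k + 1) ≤ t (k + 1) + 1 := by
      intro k
      have h1 : t k + 1 ≤ d * (t k + 1) := Nat.le_mul_of_pos_left _ hdpos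
      have h2 := ht k
      omega
    have htmono : ∀ k, t k < t (k + 1) := by
      intro k
      have := ht k
      omega
    have htk : ∀ k, k ≤ t k := by
      intro k
      induction k with
      | zero => omega
      | succ m ih => have := htmono m; omega
    have htsm : StrictMono t := strictMono_nat_of_lt_succ htmono
    -- block index
    set blk : ℕ → ℕ := fun i => Nat.findGreatest (fun k => t k ≤ i) i with hblkdef
    have hblk1 : ∀ i, t (blk i) ≤ i := by
      intro i
      have h0 : t 0 ≤ i := by rw [ht0]; exact Nat.zero_le i
      show t (Nat.findGreatest (fun k => t k ≤ i) i) ≤ i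
      exact Nat.findGreatest_spec (P := fun k => t k ≤ i) (m := 0) (n := i) (Nat.zero_le i) h0
    have hblk2 : ∀ i, i < t (blk i + 1) := by
      intro i
      by_contra hcon
      push_neg at hcon
      have hle : blk i + 1 ≤ i := le_trans (htk _) hcon
      have hgr : ¬ (t (blk i + 1) ≤ i) :=
        Nat.findGreatest_is_greatest (P := fun k => t k ≤ i) (Nat.lt_succ_self _) hle
      exact hgr hcon
    have hblk_eq : ∀ i k, t k ≤ i → i < t (k + 1) → blk i = k := by
      intro i k h1 h2
      rcases lt_trichotomy (blk i) k with h | h | h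
      · have h3 := htsm.monotone (show blk i + 1 ≤ k by omega)
        have h4 := hblk2 i
        omega
      · exact h
      · have h3 := htsm.monotone (show k + 1 ≤ blk i by omega)
        have h4 := hblk1 i
        omega
    set ξ : ℕ → X := fun i => f^[i - t (blk i)] b with hξdef
    have hξblock : ∀ i k, t k ≤ i → i < t (k + 1) → ξ i = f^[i - t k] b := by
      intro i k h1 h2
      rw [hξdef]
      simp only
      rw [hblk_eq i k h1 h2]
    have hstep : ∀ i, (¬ ∃ k, i + 1 = t (k + 1)) → ξ (i + 1) = f (ξ i) := by
      intro i hni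
      have h1 := hblk1 i
      have h2 := hblk2 i
      have h3 : i + 1 < t (blk i + 1) := by
        rcases Nat.lt_or_ge (i + 1) (t (blk i + 1)) with h | h
        · exact h
        · exact absurd ⟨blk i, by omega⟩ hni
      have h4 : ξ (i + 1) = f^[i + 1 - t (blk i)] b := hξblock (i + 1) (blk i) (by omega) h3
      have h5 : ξ i = f^[i - t (blk i)] b := rfl
      rw [h4, h5, show i + 1 - t (blk i) = (i - t (blk i)) + 1 by omega,
        Function.iterate_succ_apply']
    have herg : ErgodicPseudoOrbit f δ' ξ := by
      refine DensityZero.mono ?_ (jump_density_zero t hdbl ht0)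
      intro i hi
      simp only [Set.mem_setOf_eq] at hi ⊢
      by_contra hcon
      rw [hstep i hcon, dist_self] at hi
      linarith
    obtain ⟨p, hp⟩ := hshad ξ herg
    set E : Set ℕ := {i | ε' ≤ dist (f^[i] p) (ξ i)} with hEdef
    have hp' : Filter.limsup (fun n : ℕ => cnt E n / n) Filter.atTop < ε' := hp
    have hbdd : IsBoundedUnder (· ≤ ·) atTop (fun n : ℕ => cnt E n / n) := by
      refine isBoundedUnder_of ⟨1, fun n => ?_⟩
      rcases Nat.eq_zero_or_pos n with rfl | hn
      · simp [cnt]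
      · rw [div_le_one (by exact_mod_cast hn)]
        exact cnt_le E n
    have hev := eventually_lt_of_limsup_lt hp' hbdd
    rw [eventually_atTop] at hev
    obtain ⟨n₁, hn₁⟩ := hev
    -- each late block contains a good time
    have hgood : ∀ k, n₁ ≤ t k → ∃ i, t k ≤ i ∧ i < t (k + 1) ∧ i ∉ E := by
      intro k hk
      by_contra hcon
      push_neg at hcon
      have hcb := cnt_block_le E (le_of_lt (htmono k)) (le_refl (t (k + 1)))
        (fun i h1 h2 => hcon i h1 h2)
      have hle : t k ≤ t (k + 1) := le_of_lt (htmono k)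
      have hpos : 0 < t (k + 1) := by
        have := htmono k
        omega
      have hlt : cnt E (t (k + 1)) / (t (k + 1)) < ε' :=
        hn₁ _ (le_trans hk hle)
      rw [div_lt_iff₀ (by exact_mod_cast hpos)] at hlt
      have h2L : t (k + 1) ≤ 2 * (t (k + 1) - t k) := by
        have h1 : t k + 1 ≤ d * (t k + 1) := Nat.le_mul_of_pos_left _ hdpos
        have h2 := ht k
        omega
      have h2Lr : (t (k + 1) : ℝ) ≤ 2 * ((t (k + 1) : ℝ) - (t k : ℝ)) := by
        have := (Nat.cast_le (α := ℝ)).mpr h2L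
        rwa [Nat.cast_mul, Nat.cast_sub hle, Nat.cast_ofNat] at this
      have hL1 : (1 : ℝ) ≤ (t (k + 1) : ℝ) - (t k : ℝ) := by
        have h1 : t k + 1 ≤ t (k + 1) := htmono k
        have := (Nat.cast_le (α := ℝ)).mpr h1
        push_cast at this
        linarith
      have hmul := mul_le_mul_of_nonneg_right hε'4 (Nat.cast_nonneg (t (k + 1)) : (0:ℝ) ≤ _)
      linarith
    obtain ⟨i, hi1, hi2, hiE⟩ := hgood (n₁ + 1) (le_trans (by omega) (htk (n₁ + 1)))
    obtain ⟨j, hj1, hj2, hjE⟩ := hgood (n₁ + 2) (le_trans (by omega) (htk (n₁ + 2)))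
    have hj1' : t ((n₁ + 1) + 1) ≤ j := hj1
    have hij : i < j := lt_of_lt_of_le hi2 hj1'
    set k₀ : ℕ := n₁ + 1 with hk₀
    set u : ℕ := i - t k₀ with hu
    set v : ℕ := j - t (k₀ + 1) with hv
    have hdi : dist (f^[i] p) (f^[u] b) < ε' := by
      have hbl := hξblock i k₀ hi1 hi2
      have h' : ¬ ε' ≤ dist (f^[i] p) (ξ i) := hiE
      push_neg at h'
      rwa [hbl] at h'
    have hdj : dist (f^[j] p) (f^[v] b) < ε' := by
      have hbl := hξblock j (k₀ + 1) hj1' hj2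
      have h' : ¬ ε' ≤ dist (f^[j] p) (ξ j) := hjE
      push_neg at h'
      rwa [hbl] at h'
    obtain ⟨w', hw', hret⟩ := return_after f hmin b (v + 1) (show (0:ℝ) < δ / 2 by linarith)
    set w : ℕ := 1 + w' with hw
    have hw2 : 2 ≤ w := by omega
    have hretw : dist (f^[v + w] b) b < δ / 2 := by
      rw [show v + w = v + 1 + w' by omega]
      exact hret
    -- build the long loop
    have cA : ChainFT f δ b (f^[u] b) u := ChainFT.orbit f hδ b u
    have cB : ChainFT f δ (f^[u] b) (f^[i + 1] p) 1 := by
      refine ChainFT.single ?_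
      have h1 : dist (f^[u] b) (f^[i] p) < η := by
        rw [dist_comm]
        exact lt_of_lt_of_le hdi hε'η
      have h2 := hucont _ _ h1
      calc dist (f (f^[u] b)) (f^[i + 1] p)
          = dist (f (f^[u] b)) (f (f^[i] p)) := by rw [Function.iterate_succ_apply']
        _ < δ / 2 := h2
        _ < δ := by linarith
    have cC : ChainFT f δ (f^[i + 1] p) (f^[j] p) (j - i - 1) := by
      have hc := ChainFT.orbit f hδ (f^[i + 1] p) (j - i - 1)
      have heq : f^[j - i - 1] (f^[i + 1] p) = f^[j] p := by
        rw [← Function.iterate_add_apply]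
        congr 1
        omega
      rwa [heq] at hc
    have cD : ChainFT f δ (f^[j] p) (f^[v + 1] b) 1 := by
      refine ChainFT.single ?_
      have h1 : dist (f^[j] p) (f^[v] b) < η := lt_of_lt_of_le hdj hε'η
      have h2 := hucont _ _ h1
      calc dist (f (f^[j] p)) (f^[v + 1] b)
          = dist (f (f^[j] p)) (f (f^[v] b)) := by rw [Function.iterate_succ_apply']
        _ < δ / 2 := h2
        _ < δ := by linarith
    have cE : ChainFT f δ (f^[v + 1] b) (f^[v + w - 1] b) (w - 2) := by
      have hc := ChainFT.orbit f hδ (f^[v + 1] b) (w - 2)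
      have heq : f^[w - 2] (f^[v + 1] b) = f^[v + w - 1] b := by
        rw [← Function.iterate_add_apply]
        congr 1
        omega
      rwa [heq] at hc
    have cF : ChainFT f δ (f^[v + w - 1] b) b 1 := by
      refine ChainFT.single ?_
      have h3 : f (f^[v + w - 1] b) = f^[v + w] b := by
        rw [← Function.iterate_succ_apply' f (v + w - 1) b]
        congr 1
        omega
      rw [h3]
      linarith
    have chain1 := ((((cA.concat cB).concat cC).concat cD).concat cE).concat cF
    have hn1len : u + 1 + (j - i - 1) + 1 + (w - 2) + 1 = (t (k₀ + 1) - t k₀) + (v + w) := by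
      omega
    rw [hn1len] at chain1
    have hloop2 : ChainFT f δ b b (v + w) :=
      loop_of_return f hδ b (by omega) (by linarith)
    have hd_n1 : d ∣ (t (k₀ + 1) - t k₀) + (v + w) := hdvdR _ ⟨by omega, chain1⟩
    have hd_vw : d ∣ v + w := hdvdR _ ⟨by omega, hloop2⟩
    have hd_L : d ∣ t (k₀ + 1) - t k₀ := by
      have := Nat.dvd_sub hd_n1 hd_vw
      rwa [Nat.add_sub_cancel] at this
    have hfin : t (k₀ + 1) - t k₀ = d * (t k₀ + 1) + 1 := by
      have := ht k₀
      omega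
    rw [hfin] at hd_L
    have hone : d ∣ 1 := (Nat.dvd_add_right (Dvd.intro _ rfl)).mp hd_L
    exact Nat.dvd_one.mp hone
  -- decomposition of elements of G
  have hPQ : ∀ z : ℤ, z ∈ G → ∃ P Q : ℕ, (P = 0 ∨ Rb P) ∧ (Q = 0 ∨ Rb Q) ∧ z = (P : ℤ) - Q := by
    intro z hz
    refine AddSubgroup.closure_induction ?_ ?_ ?_ ?_ hz
    · rintro x ⟨n, hn, rfl⟩
      exact ⟨n, 0, Or.inr hn, Or.inl rfl, by simp⟩
    · exact ⟨0, 0, Or.inl rfl, Or.inl rfl, by simp⟩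
    · rintro x y hx hy ⟨P, Q, hP, hQ, rfl⟩ ⟨P', Q', hP', hQ', rfl⟩
      refine ⟨P + P', Q + Q', ?_, ?_, by push_cast; ring⟩
      · rcases hP with rfl | hP
        · simpa using hP'
        · rcases hP' with rfl | hP'
          · simpa using Or.inr hP
          · exact Or.inr (hadd hP hP')
      · rcases hQ with rfl | hQ
        · simpa using hQ'
        · rcases hQ' with rfl | hQ'
          · simpa using Or.inr hQ
          · exact Or.inr (hadd hQ hQ')
    · rintro x hx ⟨P, Q, hP, hQ, rfl⟩
      exact ⟨Q, P, hQ, hP, by ring⟩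
  have h1G : (1 : ℤ) ∈ G := by
    have : ((1 : ℕ) : ℤ) ∈ G := by rw [← hd1]; exact hdG
    exact_mod_cast this
  obtain ⟨P, Q, hP, hQ, hPQ1⟩ := hPQ 1 h1G
  have hPQn : P = Q + 1 := by omega
  rcases hQ with rfl | hQ
  · -- P = 1, so Rb 1
    have hP1 : P = 1 := by omega
    rcases hP with rfl | hP
    · omega
    · rw [hP1] at hP
      exact ⟨1, le_refl 1, hP.2, (hadd hP hP).2⟩
  · rcases hP with rfl | hP
    · omega
    · exact ⟨Q, hQ.1, hQ.2, by rw [← hPQn]; exact hP.2⟩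

end LemB

lemma chain_to {X : Type*} [MetricSpace X] (f : X → X) (hmin : MinimalMap f) {δ : ℝ}
    (hδ : 0 < δ) (a b : X) :
    ∃ n, 1 ≤ n ∧ ChainFT f δ a b n := by
  have hd := hmin (f a)
  rw [Metric.dense_iff] at hd
  obtain ⟨z, hz1, s, rfl⟩ := hd b δ hδ
  refine ⟨s + 1, by omega, ?_⟩
  have c1 := ChainFT.orbit f hδ a s
  have h2 : dist (f (f^[s] a)) b < δ := by
    have he : f (f^[s] a) = f^[s] (f a) := by
      rw [← Function.iterate_succ_apply' f s a, Function.iterate_succ_apply f s a]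
    rw [he]
    simpa [Metric.mem_ball] using hz1
  exact c1.concat (ChainFT.single h2)


end Aux

theorem stmt16 {X : Type*} [MetricSpace X] [CompactSpace X] [Nontrivial X]
    (f : X → X) (hf : Continuous f) (hmin : MinimalMap f) (hs : Shadowing f) :
    ¬ MeanErgodicShadowingDens f := by
  intro hmes
  obtain ⟨a, b, hab⟩ := exists_pair_ne X
  have hD : 0 < dist a b := dist_pos.mpr hab
  set ε : ℝ := dist a b / 5 with hε
  have hεpos : 0 < ε := by rw [hε]; linarith
  obtain ⟨δ, hδpos, hshad⟩ := hs ε hεpos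
  obtain ⟨s, hs1, hcs, hcs1⟩ := consecutive_loops f hf hmin hmes hδpos b
  obtain ⟨nab, hnab1, hcab⟩ := chain_to f hmin hδpos a b
  set N : ℕ := s * (s + 1) with hN
  have hN1 : 1 ≤ N := by
    rw [hN]
    exact Nat.mul_pos (by omega) (by omega)
  have hcN : ChainFT f δ b b N := hcs1.nsmul s
  set c : ℕ := N - nab % N with hc
  have hmodlt : nab % N < N := Nat.mod_lt nab (by omega)
  have hc1 : 1 ≤ c := by omega
  have hcle : c ≤ N := by omega
  -- the loop of length x := N * s + c
  have hx0 : ChainFT f δ b b (c * (s + 1) + (N - c) * s) :=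
    (hcs1.nsmul c).concat (hcs.nsmul (N - c))
  have hxeq : c * (s + 1) + (N - c) * s = N * s + c := by
    have h1 : (N - c) * s = N * s - c * s := Nat.sub_mul N c s
    have h2 : c * s ≤ N * s := Nat.mul_le_mul_right s hcle
    have h3 : c * (s + 1) = c * s + c := by ring
    omega
  rw [hxeq] at hx0
  set x : ℕ := N * s + c with hxdef
  set N₀ : ℕ := nab + x with hN₀
  have hchainab : ChainFT f δ a b N₀ := hcab.concat hx0
  have hdvdN₀ : N ∣ N₀ := by
    refine ⟨nab / N + s + 1, ?_⟩
    have h1 : N * (nab / N + s + 1) = N * (nab / N) + N * s + N := by ring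
    have hq : N * (nab / N) + nab % N = nab := Nat.div_add_mod nab N
    omega
  set q₀ : ℕ := N₀ / N with hq₀
  have hNq₀ : N * q₀ = N₀ := Nat.mul_div_cancel' hdvdN₀
  have hq₀1 : 1 ≤ q₀ := by
    rcases Nat.eq_zero_or_pos q₀ with h | h
    · rw [h, Nat.mul_zero] at hNq₀; omega
    · exact h
  -- the pseudo-orbit
  obtain ⟨c1, hc10, hc1N, hc1s⟩ := hchainab
  obtain ⟨c2, hc20, hc2N, hc2s⟩ := hcN
  set ξ : ℕ → X := fun i => if i < N₀ then c1 i else c2 ((i - N₀) % N) with hξ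
  have hξ0 : ξ 0 = a := by
    simp only [hξ, if_pos (show 0 < N₀ by omega)]
    exact hc10
  have hstep : ∀ i, dist (f (ξ i)) (ξ (i + 1)) < δ := by
    intro i
    by_cases h1 : i + 1 < N₀
    · have h2 : i < N₀ := by omega
      have e1 : ξ i = c1 i := by simp only [hξ, if_pos h2]
      have e2 : ξ (i + 1) = c1 (i + 1) := by simp only [hξ, if_pos h1]
      rw [e1, e2]
      exact hc1s i (by omega)
    · by_cases h2 : i + 1 = N₀
      · have h3 : i < N₀ := by omega
        have e1 : ξ i = c1 i := by simp only [hξ, if_pos h3]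
        have e2 : ξ (i + 1) = c2 0 := by
          simp only [hξ, h2, Nat.sub_self, Nat.zero_mod, if_neg (lt_irrefl N₀)]
        rw [e1, e2, hc20, ← hc1N, ← h2]
        exact hc1s i (by omega)
      · have h3 : N₀ ≤ i := by omega
        set r : ℕ := (i - N₀) % N with hr
        have hrN : r < N := Nat.mod_lt _ (by omega)
        have e1 : ξ i = c2 r := by simp only [hξ, if_neg (show ¬ (i < N₀) by omega), hr]
        have h6 : (i + 1 - N₀) % N = (r + 1) % N := by
          rw [show i + 1 - N₀ = (i - N₀) + 1 by omega, hr]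
          conv_lhs => rw [Nat.add_mod]
          conv_rhs => rw [Nat.add_mod, Nat.mod_mod_of_dvd _ dvd_rfl]
        by_cases h7 : r + 1 = N
        · have e2 : ξ (i + 1) = c2 0 := by
            simp only [hξ, if_neg (show ¬ (i + 1 < N₀) by omega), h6, h7, Nat.mod_self]
          rw [e1, e2, hc20, ← hc2N, ← h7]
          exact hc2s r (by omega)
        · have e2 : ξ (i + 1) = c2 (r + 1) := by
            simp only [hξ, if_neg (show ¬ (i + 1 < N₀) by omega), h6,
              Nat.mod_eq_of_lt (show r + 1 < N by omega)]
          rw [e1, e2]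
          exact hc2s r (by omega)
  obtain ⟨p, hpshad⟩ := hshad ξ hstep
  have hpa : dist p a < ε := by
    have := hpshad 0
    rwa [Function.iterate_zero_apply, hξ0] at this
  obtain ⟨j, hjq₀, hj1, hjrec⟩ := recurrent_pow f hf hmin N hN1 p ε hεpos q₀
  have hNj : N₀ ≤ N * j := by
    calc N₀ = N * q₀ := hNq₀.symm
      _ ≤ N * j := Nat.mul_le_mul_left N hjq₀
  have hξNj : ξ (N * j) = b := by
    have h1 : ¬ (N * j < N₀) := by omega
    have h2 : (N * j - N₀) % N = 0 := by
      have hdvd2 : N ∣ N * j - N₀ := Nat.dvd_sub (Dvd.intro j rfl) hdvdN₀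
      exact Nat.dvd_iff_mod_eq_zero.mp hdvd2
    simp only [hξ, if_neg h1, h2]
    exact hc20
  have hpb : dist (f^[N * j] p) b < ε := by
    have := hpshad (N * j)
    rwa [hξNj] at this
  have htri : dist a b ≤ dist a p + dist p (f^[N * j] p) + dist (f^[N * j] p) b :=
    dist_triangle4 a p (f^[N * j] p) b
  rw [dist_comm a p, dist_comm p (f^[N * j] p)] at htri
  rw [hε] at hpa hpb hjrec
  linarith
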